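/- Let p ≥ 1, let X be a Banach space, let n ∈ ℕ, let m ≥ 2 be an even integer, let k be an odd integer with 0 < k < m/2, and let f : ℤ_m^n → X. Then ∫_{ℤ_m^n} ‖Δ_{[n]}f(x) − f(x)‖_X^p dμ(x) ≤ (k−1)^p n^{p−1} Σ_{j=1}^n ∫_{ℤ_m^n} ‖f(x + e_j) − f(x)‖_X^p dμ(x). -/

import Mathlib

open Finset

open scoped Classical in
/-- For `B ⊆ [n]`, `L_B` is the set of `y ∈ ℤ_m^n` such that `y_i = 0` for `i ∉ B`,
every coordinate `y_i` is even, and `d_{ℤ_m^n}(0,y) = ∑_i min(y_i, m - y_i) < k`. -/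
noncomputable def LB (m n k : ℕ) [NeZero m] (B : Finset (Fin n)) :
    Finset (Fin n → ZMod m) :=
  Finset.univ.filter fun y =>
    (∀ i, i ∉ B → y i = 0) ∧ (∀ i, Even (y i).val) ∧
      (∑ i, min (y i).val (m - (y i).val)) < k

/-- The averaging operator `Δ_B f(x) = (1/|L_B|) ∑_{y ∈ L_B} f(x + y)`. -/
noncomputable def Delta (m n k : ℕ) [NeZero m] {X : Type*} [NormedAddCommGroup X]
    [NormedSpace ℝ X] (B : Finset (Fin n)) (f : (Fin n → ZMod m) → X)
    (x : Fin n → ZMod m) : X :=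
  ((LB m n k B).card : ℝ)⁻¹ • ∑ y ∈ LB m n k B, f (x + y)

section EphiAux

variable {G : Type*} [Fintype G] [AddCommGroup G]
variable {X : Type*} [NormedAddCommGroup X]
variable {p : ℝ}

noncomputable def Ephi (p : ℝ) (f : G → X) (g : G) : ℝ :=
  (∑ x : G, ‖f (x + g) - f x‖ ^ p) ^ (1 / p)

lemma Esum_nonneg (p : ℝ) (f : G → X) (g : G) :
    0 ≤ ∑ x : G, ‖f (x + g) - f x‖ ^ p :=
  Finset.sum_nonneg fun _ _ => Real.rpow_nonneg (norm_nonneg _) _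

lemma Ephi_nonneg (p : ℝ) (f : G → X) (g : G) : 0 ≤ Ephi p f g :=
  Real.rpow_nonneg (Esum_nonneg p f g) _

lemma Ephi_rpow (hp : 1 ≤ p) (f : G → X) (g : G) :
    Ephi p f g ^ p = ∑ x : G, ‖f (x + g) - f x‖ ^ p := by
  have hp0 : p ≠ 0 := by intro h; rw [h] at hp; linarith
  rw [Ephi, ← Real.rpow_mul (Esum_nonneg p f g), one_div, inv_mul_cancel₀ hp0, Real.rpow_one]

lemma Esum_shift (p : ℝ) (f : G → X) (a g : G) :
    ∑ x : G, ‖f (x + a + g) - f (x + a)‖ ^ p = ∑ x : G, ‖f (x + g) - f x‖ ^ p :=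
  Equiv.sum_comp (Equiv.addRight a) (fun x => ‖f (x + g) - f x‖ ^ p)

lemma Ephi_zero (hp : 1 ≤ p) (f : G → X) : Ephi p f 0 = 0 := by
  have hp0 : p ≠ 0 := by intro h; rw [h] at hp; linarith
  simp [Ephi, Real.zero_rpow hp0, Real.zero_rpow (one_div_ne_zero hp0),
    Real.zero_rpow (inv_ne_zero hp0)]

lemma Ephi_neg (p : ℝ) (f : G → X) (g : G) : Ephi p f (-g) = Ephi p f g := by
  rw [Ephi, Ephi]
  congr 1
  calc ∑ x : G, ‖f (x + -g) - f x‖ ^ p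
      = ∑ x : G, ‖f ((x + g) + -g) - f (x + g)‖ ^ p :=
        (Equiv.sum_comp (Equiv.addRight g) fun x => ‖f (x + -g) - f x‖ ^ p).symm
    _ = ∑ x : G, ‖f (x + g) - f x‖ ^ p :=
        Finset.sum_congr rfl fun x _ => by rw [add_neg_cancel_right, norm_sub_rev]

lemma Ephi_add_le (hp : 1 ≤ p) (f : G → X) (g h : G) :
    Ephi p f (g + h) ≤ Ephi p f g + Ephi p f h := by
  have hp' : (0:ℝ) ≤ p := le_trans zero_le_one hp
  set u : G → ℝ := fun x => ‖f (x + h + g) - f (x + h)‖ with hu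
  set v : G → ℝ := fun x => ‖f (x + h) - f x‖ with hv
  have key : ∀ x : G, ‖f (x + (g + h)) - f x‖ ≤ u x + v x := by
    intro x
    have hx : f (x + (g + h)) - f x = (f (x + h + g) - f (x + h)) + (f (x + h) - f x) := by
      rw [add_comm g h, ← add_assoc]; abel
    rw [hx]; exact norm_add_le _ _
  have minkowski := Real.Lp_add_le_of_nonneg Finset.univ hp
    (fun x _ => norm_nonneg (f (x + h + g) - f (x + h))) (fun x _ => norm_nonneg (f (x + h) - f x))
  calc Ephi p f (g + h)
      ≤ (∑ x : G, (u x + v x) ^ p) ^ (1 / p) := by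
        apply Real.rpow_le_rpow (Esum_nonneg p f (g + h))
          (Finset.sum_le_sum fun x _ =>
            Real.rpow_le_rpow (norm_nonneg _) (key x) hp') (by positivity)
    _ ≤ (∑ x : G, u x ^ p) ^ (1 / p) + (∑ x : G, v x ^ p) ^ (1 / p) := minkowski
    _ = Ephi p f g + Ephi p f h := by
        rw [Ephi, Ephi]
        congr 1
        · congr 1; exact Esum_shift p f h g

lemma Ephi_sum_le (hp : 1 ≤ p) (f : G → X) {ι : Type*} (s : Finset ι) (a : ι → G) :
    Ephi p f (∑ i ∈ s, a i) ≤ ∑ i ∈ s, Ephi p f (a i) := by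
  classical
  induction s using Finset.cons_induction with
  | empty => simp [Ephi_zero hp f]
  | cons i s hi ih =>
      rw [Finset.sum_cons, Finset.sum_cons]
      exact (Ephi_add_le hp f _ _).trans (add_le_add_right ih _)

lemma Ephi_nsmul_le (hp : 1 ≤ p) (f : G → X) (t : ℕ) (g : G) :
    Ephi p f (t • g) ≤ (t : ℝ) * Ephi p f g := by
  have h : t • g = ∑ _i ∈ Finset.range t, g := by simp
  rw [h]
  refine (Ephi_sum_le hp f _ _).trans ?_
  simp [mul_comm]

end EphiAux

/-- The approximation property: for every Banach space `X`, every even `m ≥ 2`, every odd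
`0 < k < m/2` and every `f : ℤ_m^n → X`,
`∫ ‖Δ_{[n]}f(x) - f(x)‖^p dμ(x) ≤ (k-1)^p n^(p-1) ∑_j ∫ ‖f(x+e_j) - f(x)‖^p dμ(x)`. -/
theorem approximation_property (p : ℝ) (hp : 1 ≤ p)
    (X : Type*) [NormedAddCommGroup X] [NormedSpace ℝ X] [CompleteSpace X]
    (n m k : ℕ) [NeZero m] (hm2 : 2 ≤ m) (hme : m % 2 = 0)
    (hk : Odd k) (hk0 : 0 < k) (hkm : 2 * k < m)
    (f : (Fin n → ZMod m) → X) :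
    (∑ x : Fin n → ZMod m, ‖Delta m n k Finset.univ f x - f x‖ ^ p) / (m : ℝ) ^ n ≤
      ((k : ℝ) - 1) ^ p * (n : ℝ) ^ (p - 1) *
        ∑ j : Fin n,
          (∑ x : Fin n → ZMod m, ‖f (x + Pi.single j 1) - f x‖ ^ p) / (m : ℝ) ^ n := by
    classical
  have hp' : (0:ℝ) ≤ p := le_trans zero_le_one hp
  set L := LB m n k Finset.univ with hLdef
  have h0L : (0 : Fin n → ZMod m) ∈ L := by
    rw [hLdef, LB, Finset.mem_filter]
    refine ⟨Finset.mem_univ _, fun i _ => rfl, fun i => ?_, ?_⟩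
    · simp [ZMod.val_zero]
    · simpa [ZMod.val_zero] using hk0
  have hN : 0 < L.card := Finset.card_pos.mpr ⟨0, h0L⟩
  have hNR : (0:ℝ) < (L.card : ℝ) := by exact_mod_cast hN
  set C : ℝ := ((k : ℝ) - 1) ^ p * (n : ℝ) ^ (p - 1) *
      ∑ j : Fin n, ∑ x : Fin n → ZMod m, ‖f (x + Pi.single j 1) - f x‖ ^ p with hCdef
  have hk1 : (1:ℝ) ≤ (k:ℝ) := by exact_mod_cast hk0
  -- per-coordinate bound
  have hsingle_cast : ∀ (j : Fin n) (t : ℕ),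
      (Pi.single j ((t : ZMod m)) : Fin n → ZMod m) = t • (Pi.single j (1 : ZMod m)) := by
    intro j t
    induction t with
    | zero => simp
    | succ t ih =>
        rw [Nat.cast_succ, Pi.single_add, ih, succ_nsmul]
  have key_single : ∀ (j : Fin n) (c : ZMod m),
      Ephi p f (Pi.single j c) ≤
        ((min c.val (m - c.val) : ℕ) : ℝ) * Ephi p f (Pi.single j 1) := by
    intro j c
    rcases le_or_gt c.val (m - c.val) with hc | hc
    · have h1 : Pi.single j c = ((c.val • Pi.single j (1 : ZMod m) : Fin n → ZMod m)) := by
        rw [← hsingle_cast, ZMod.natCast_zmod_val]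
      rw [min_eq_left hc, h1]
      exact Ephi_nsmul_le hp f _ _
    · have hc0 : c ≠ 0 := by
        intro h; subst h; simp [ZMod.val_zero] at hc
      have hneg : (-c).val = m - c.val := by
        rw [ZMod.neg_val, if_neg hc0]
      have h1 : Pi.single j c = -(((m - c.val) • Pi.single j (1 : ZMod m) : Fin n → ZMod m)) := by
        rw [← hsingle_cast, ← hneg, ← Pi.single_neg, ZMod.natCast_zmod_val, neg_neg]
      rw [min_eq_right hc.le, h1]
      rw [Ephi_neg]
      exact Ephi_nsmul_le hp f _ _
  -- bound for each y in L
  have key_y : ∀ y ∈ L, (∑ x : Fin n → ZMod m, ‖f (x + y) - f x‖ ^ p) ≤ C := by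
    intro y hy
    have hsum : (∑ i, min (y i).val (m - (y i).val)) < k := by
      rw [hLdef, LB, Finset.mem_filter] at hy
      exact hy.2.2.2
    have hterm : ∀ j : Fin n, ((min (y j).val (m - (y j).val) : ℕ) : ℝ) ≤ (k:ℝ) - 1 := by
      intro j
      have h1 : min (y j).val (m - (y j).val) ≤ k - 1 := by
        have := Finset.single_le_sum
          (f := fun i => min (y i).val (m - (y i).val))
          (fun i _ => Nat.zero_le _) (Finset.mem_univ j)
        have h2 : min (y j).val (m - (y j).val) < k := lt_of_le_of_lt (by simpa using this) hsum
        omega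
      have := (Nat.cast_le (α := ℝ)).mpr h1
      rw [Nat.cast_sub hk0, Nat.cast_one] at this
      exact this
    have hdecomp : y = ∑ j, Pi.single j (y j) := (Finset.univ_sum_single y).symm
    have h1 : Ephi p f y ≤ ∑ j, ((min (y j).val (m - (y j).val) : ℕ) : ℝ) * Ephi p f (Pi.single j 1) := by
      calc Ephi p f y = Ephi p f (∑ j, Pi.single j (y j)) := by rw [← hdecomp]
        _ ≤ ∑ j, Ephi p f (Pi.single j (y j)) := Ephi_sum_le hp f _ _
        _ ≤ _ := Finset.sum_le_sum fun j _ => key_single j (y j)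
    have h2 : Ephi p f y ^ p ≤ C := by
      calc Ephi p f y ^ p
          ≤ (∑ j, ((min (y j).val (m - (y j).val) : ℕ) : ℝ) * Ephi p f (Pi.single j 1)) ^ p :=
            Real.rpow_le_rpow (Ephi_nonneg p f y) h1 hp'
        _ ≤ (n : ℝ) ^ (p - 1) *
              ∑ j, (((min (y j).val (m - (y j).val) : ℕ) : ℝ) * Ephi p f (Pi.single j 1)) ^ p := by
            have := Real.rpow_sum_le_const_mul_sum_rpow_of_nonneg
              (s := Finset.univ) (f := fun j : Fin n =>
                ((min (y j).val (m - (y j).val) : ℕ) : ℝ) * Ephi p f (Pi.single j 1)) hp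
              (fun j _ => mul_nonneg (Nat.cast_nonneg _) (Ephi_nonneg p f _))
            simpa using this
        _ ≤ (n : ℝ) ^ (p - 1) * ∑ j, ((k:ℝ) - 1) ^ p * Ephi p f (Pi.single j 1) ^ p := by
            apply mul_le_mul_of_nonneg_left _ (Real.rpow_nonneg (Nat.cast_nonneg n) _)
            apply Finset.sum_le_sum
            intro j _
            rw [Real.mul_rpow (Nat.cast_nonneg _) (Ephi_nonneg p f _)]
            apply mul_le_mul_of_nonneg_right _ (Real.rpow_nonneg (Ephi_nonneg p f _) _)
            exact Real.rpow_le_rpow (Nat.cast_nonneg _) (hterm j) hp'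
        _ = C := by
            rw [hCdef]
            simp_rw [Ephi_rpow hp f]
            rw [← Finset.mul_sum]
            ring
    calc (∑ x : Fin n → ZMod m, ‖f (x + y) - f x‖ ^ p) = Ephi p f y ^ p := (Ephi_rpow hp f y).symm
      _ ≤ C := h2
  have jensen : ∀ x : Fin n → ZMod m,
      ‖Delta m n k Finset.univ f x - f x‖ ^ p ≤
        ((L.card : ℝ))⁻¹ * ∑ y ∈ L, ‖f (x + y) - f x‖ ^ p := by
    intro x
    have hΔ : Delta m n k Finset.univ f x - f x
        = ((L.card : ℝ))⁻¹ • ∑ y ∈ L, (f (x + y) - f x) := by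
      rw [Delta, Finset.sum_sub_distrib, smul_sub, Finset.sum_const, ← hLdef]
      congr 1
      rw [← Nat.cast_smul_eq_nsmul ℝ, smul_smul, inv_mul_cancel₀ hNR.ne', one_smul]
    rw [hΔ, norm_smul, Real.norm_eq_abs, abs_of_nonneg (inv_nonneg.mpr hNR.le)]
    have hsum_le : ‖∑ y ∈ L, (f (x + y) - f x)‖ ≤ ∑ y ∈ L, ‖f (x + y) - f x‖ :=
      norm_sum_le _ _
    calc (((L.card : ℝ))⁻¹ * ‖∑ y ∈ L, (f (x + y) - f x)‖) ^ p
        = ((L.card : ℝ))⁻¹ ^ p * ‖∑ y ∈ L, (f (x + y) - f x)‖ ^ p :=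
          Real.mul_rpow (inv_nonneg.mpr hNR.le) (norm_nonneg _)
      _ ≤ ((L.card : ℝ))⁻¹ ^ p *
            ((L.card : ℝ) ^ (p - 1) * ∑ y ∈ L, ‖f (x + y) - f x‖ ^ p) := by
          apply mul_le_mul_of_nonneg_left _ (Real.rpow_nonneg (inv_nonneg.mpr hNR.le) _)
          calc ‖∑ y ∈ L, (f (x + y) - f x)‖ ^ p
              ≤ (∑ y ∈ L, ‖f (x + y) - f x‖) ^ p :=
                Real.rpow_le_rpow (norm_nonneg _) hsum_le hp'
            _ ≤ (L.card : ℝ) ^ (p - 1) * ∑ y ∈ L, ‖f (x + y) - f x‖ ^ p := by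
                simpa using Real.rpow_sum_le_const_mul_sum_rpow_of_nonneg L hp
                  (f := fun y => ‖f (x + y) - f x‖) (fun y _ => norm_nonneg _)
      _ = ((L.card : ℝ))⁻¹ * ∑ y ∈ L, ‖f (x + y) - f x‖ ^ p := by
          rw [← mul_assoc]
          congr 1
          rw [Real.inv_rpow hNR.le, ← Real.rpow_neg hNR.le, ← Real.rpow_add hNR,
            show -p + (p - 1) = -1 by ring, Real.rpow_neg_one]
  have main : (∑ x : Fin n → ZMod m, ‖Delta m n k Finset.univ f x - f x‖ ^ p) ≤ C := by
    calc ∑ x : Fin n → ZMod m, ‖Delta m n k Finset.univ f x - f x‖ ^ p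
        ≤ ∑ x : Fin n → ZMod m, ((L.card : ℝ))⁻¹ * ∑ y ∈ L, ‖f (x + y) - f x‖ ^ p :=
          Finset.sum_le_sum fun x _ => jensen x
      _ = ((L.card : ℝ))⁻¹ * ∑ y ∈ L, ∑ x : Fin n → ZMod m, ‖f (x + y) - f x‖ ^ p := by
          rw [← Finset.mul_sum, Finset.sum_comm]
      _ ≤ ((L.card : ℝ))⁻¹ * ∑ _y ∈ L, C :=
          mul_le_mul_of_nonneg_left (Finset.sum_le_sum key_y) (inv_nonneg.mpr hNR.le)
      _ = C := by
          rw [Finset.sum_const, nsmul_eq_mul, ← mul_assoc, inv_mul_cancel₀ hNR.ne', one_mul]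
  have hmn : (0:ℝ) < (m : ℝ) ^ n := by
    have : (0:ℝ) < (m:ℝ) := by exact_mod_cast Nat.lt_of_lt_of_le Nat.zero_lt_two hm2
    positivity
  calc (∑ x : Fin n → ZMod m, ‖Delta m n k Finset.univ f x - f x‖ ^ p) / (m : ℝ) ^ n
      ≤ C / (m : ℝ) ^ n := by gcongr
    _ = ((k : ℝ) - 1) ^ p * (n : ℝ) ^ (p - 1) *
          ∑ j : Fin n,
            (∑ x : Fin n → ZMod m, ‖f (x + Pi.single j 1) - f x‖ ^ p) / (m : ℝ) ^ n := by
        rw [hCdef, mul_div_assoc, Finset.sum_div]
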